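/- Let p : ℝ × ℝ → ℝ be smooth, written p = p(x, t) with partial derivatives p_x, p_t, p_xx, p_xxx. For m ∈ ℝ define smooth maps U_m, V_m : ℝ × ℝ → Matrix(Fin 2, Fin 2, ℝ) by U_m := [[0, p + m], [1, 0]] and V_m := [[−p_x/2, −p_xx/2 + (p − 2m)(p + m)], [p − 2m, p_x/2]] (rows listed top to bottom). Then the zero-curvature equation ∂_x V_m − ∂_t U_m + U_m·V_m − V_m·U_m = 0 holds identically on ℝ × ℝ for every m ∈ ℝ if and only if p satisfies the KdV equation p_t = −p_xxx/2 + 3·p·p_x. (This is the zero-curvature representation, in the frame (ψ, ψ_x) of a normalised lift, of the pencil of flat connections associated to an isothermic curve in ℝP¹ with projective curvature p evolving by f_t = p·f_x.) -/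

import Mathlib

/-- Partial derivative in the first (space) variable `x`. -/
noncomputable def pdx (f : ℝ × ℝ → ℝ) (z : ℝ × ℝ) : ℝ := fderiv ℝ f z (1, 0)

/-- Partial derivative in the second (time) variable `t`. -/
noncomputable def pdt (f : ℝ × ℝ → ℝ) (z : ℝ × ℝ) : ℝ := fderiv ℝ f z (0, 1)

/-- The matrix `U_m = [[0, p + m], [1, 0]]` of the AKNS-type pencil of connections
attached to an isothermic curve in `ℝP¹` with projective curvature `p`. -/
noncomputable def Umat (p : ℝ × ℝ → ℝ) (m : ℝ) (z : ℝ × ℝ) : Matrix (Fin 2) (Fin 2) ℝ :=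
  !![0, p z + m; 1, 0]

/-- The matrix `V_m = [[−p_x/2, −p_xx/2 + (p − 2m)(p + m)], [p − 2m, p_x/2]]`. -/
noncomputable def Vmat (p : ℝ × ℝ → ℝ) (m : ℝ) (z : ℝ × ℝ) : Matrix (Fin 2) (Fin 2) ℝ :=
  !![-(pdx p z) / 2, -(pdx (pdx p) z) / 2 + (p z - 2 * m) * (p z + m);
     p z - 2 * m, (pdx p z) / 2]

lemma contDiff_pdx {f : ℝ × ℝ → ℝ} (hf : ContDiff ℝ (⊤ : ℕ∞) f) :
    ContDiff ℝ (⊤ : ℕ∞) (pdx f) :=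
  (hf.fderiv_right (by simp)).clm_apply contDiff_const

section pd
variable {f g : ℝ × ℝ → ℝ} {z : ℝ × ℝ} {c : ℝ}

lemma pdx_add (hf : DifferentiableAt ℝ f z) (hg : DifferentiableAt ℝ g z) :
    pdx (fun w => f w + g w) z = pdx f z + pdx g z := by
  unfold pdx; rw [fderiv_fun_add hf hg]; rfl

lemma pdx_mul (hf : DifferentiableAt ℝ f z) (hg : DifferentiableAt ℝ g z) :
    pdx (fun w => f w * g w) z = f z * pdx g z + g z * pdx f z := by
  unfold pdx; rw [fderiv_fun_mul hf hg]; simp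

lemma pdx_const : pdx (fun _ : ℝ × ℝ => c) z = 0 := by
  unfold pdx; rw [fderiv_fun_const]; rfl

lemma pdt_const : pdt (fun _ : ℝ × ℝ => c) z = 0 := by
  unfold pdt; rw [fderiv_fun_const]; rfl

lemma pdx_add_const (f : ℝ × ℝ → ℝ) (c : ℝ) :
    pdx (fun w => f w + c) z = pdx f z := by
  unfold pdx; rw [fderiv_add_const]

lemma pdt_add_const (f : ℝ × ℝ → ℝ) (c : ℝ) :
    pdt (fun w => f w + c) z = pdt f z := by
  unfold pdt; rw [fderiv_add_const]

lemma pdx_sub_const (f : ℝ × ℝ → ℝ) (c : ℝ) :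
    pdx (fun w => f w - c) z = pdx f z := by
  unfold pdx; rw [fderiv_sub_const]

lemma pdx_neg (f : ℝ × ℝ → ℝ) : pdx (fun w => -(f w)) z = -(pdx f z) := by
  unfold pdx; rw [fderiv_fun_neg]; rfl

lemma pdx_div_const (hf : DifferentiableAt ℝ f z) (c : ℝ) :
    pdx (fun w => f w / c) z = pdx f z / c := by
  unfold pdx
  simp only [div_eq_mul_inv]
  rw [fderiv_mul_const hf]
  simp [mul_comm]

end pd

/-- **Zero-curvature representation of the KdV equation.**  The zero-curvature
equation `∂ₓV_m − ∂ₜU_m + U_m V_m − V_m U_m = 0` holds for every `m ∈ ℝ` if and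
only if `p` satisfies the KdV equation `p_t = −p_xxx/2 + 3 p p_x`. -/
theorem kdv_zero_curvature (p : ℝ × ℝ → ℝ) (hp : ContDiff ℝ (⊤ : ℕ∞) p) :
    (∀ m : ℝ, ∀ z : ℝ × ℝ, ∀ i j : Fin 2,
      pdx (fun w => Vmat p m w i j) z - pdt (fun w => Umat p m w i j) z +
        (Umat p m z * Vmat p m z - Vmat p m z * Umat p m z) i j = 0) ↔
    (∀ z : ℝ × ℝ, pdt p z = -(pdx (pdx (pdx p)) z) / 2 + 3 * p z * pdx p z) := by
  have d0 : Differentiable ℝ p := hp.differentiable (by simp)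
  have d1 : Differentiable ℝ (pdx p) := (contDiff_pdx hp).differentiable (by simp)
  have d2 : Differentiable ℝ (pdx (pdx p)) :=
    (contDiff_pdx (contDiff_pdx hp)).differentiable (by simp)
  have key : ∀ m : ℝ, ∀ z : ℝ × ℝ,
      pdx (fun w => Vmat p m w 0 1) z - pdt (fun w => Umat p m w 0 1) z +
        (Umat p m z * Vmat p m z - Vmat p m z * Umat p m z) 0 1 =
      -(pdx (pdx (pdx p)) z) / 2 + 3 * p z * pdx p z - pdt p z := by
    intro m z
    have hA : DifferentiableAt ℝ (fun w => -(pdx (pdx p) w) / 2) z :=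
      by fun_prop
    have hB : DifferentiableAt ℝ (fun w => (p w - 2 * m) * (p w + m)) z :=
      ((d0 z).sub_const _).mul ((d0 z).add_const _)
    simp only [Umat, Vmat, Matrix.mul_fin_two, Matrix.sub_apply, Matrix.cons_val',
      Matrix.cons_val_zero, Matrix.cons_val_one, Matrix.head_cons, Matrix.empty_val',
      Matrix.cons_val_fin_one, Matrix.head_fin_const, Matrix.of_apply]
    rw [pdx_add hA hB,
      pdx_div_const ((d2 z).fun_neg) 2, pdx_neg (pdx (pdx p)),
      pdx_mul ((d0 z).sub_const _) ((d0 z).add_const _),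
      pdx_sub_const p (2 * m), pdx_add_const p m, pdt_add_const p m]
    ring
  constructor
  · intro h z
    have := h 0 z 0 1
    rw [key 0 z] at this
    linarith
  · intro h m z i j
    fin_cases i <;> fin_cases j
    · show pdx (fun w => Vmat p m w 0 0) z - pdt (fun w => Umat p m w 0 0) z +
        (Umat p m z * Vmat p m z - Vmat p m z * Umat p m z) 0 0 = 0
      simp only [Umat, Vmat, Matrix.mul_fin_two, Matrix.sub_apply, Matrix.cons_val',
        Matrix.cons_val_zero, Matrix.cons_val_one, Matrix.head_cons, Matrix.empty_val',
        Matrix.cons_val_fin_one, Matrix.head_fin_const, Matrix.of_apply]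
      rw [pdx_div_const ((d1 z).fun_neg) 2, pdx_neg (pdx p), pdt_const]
      ring
    · show pdx (fun w => Vmat p m w 0 1) z - pdt (fun w => Umat p m w 0 1) z +
        (Umat p m z * Vmat p m z - Vmat p m z * Umat p m z) 0 1 = 0
      rw [key m z, h z]; ring
    · show pdx (fun w => Vmat p m w 1 0) z - pdt (fun w => Umat p m w 1 0) z +
        (Umat p m z * Vmat p m z - Vmat p m z * Umat p m z) 1 0 = 0
      simp only [Umat, Vmat, Matrix.mul_fin_two, Matrix.sub_apply, Matrix.cons_val',
        Matrix.cons_val_zero, Matrix.cons_val_one, Matrix.head_cons, Matrix.empty_val',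
        Matrix.cons_val_fin_one, Matrix.head_fin_const, Matrix.of_apply]
      rw [pdx_sub_const p (2 * m), pdt_const]
      ring
    · show pdx (fun w => Vmat p m w 1 1) z - pdt (fun w => Umat p m w 1 1) z +
        (Umat p m z * Vmat p m z - Vmat p m z * Umat p m z) 1 1 = 0
      simp only [Umat, Vmat, Matrix.mul_fin_two, Matrix.sub_apply, Matrix.cons_val',
        Matrix.cons_val_zero, Matrix.cons_val_one, Matrix.head_cons, Matrix.empty_val',
        Matrix.cons_val_fin_one, Matrix.head_fin_const, Matrix.of_apply]
      rw [pdx_div_const (d1 z) 2, pdt_const]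
      ring
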